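/- Fix an integer k ≥ 1 and a real p ≥ 1. Let a_i = e_{ii} and b_i = k^{−1/(2p)} e_{1i} in M_k(ℂ) for 1 ≤ i ≤ k, where e_{ij} are the matrix units. Define T_1(x) = Σ_i a_i* x b_i, T_2(x) = Σ_i b_i* x a_i, T_3(x) = Σ_i a_i* x a_i, T_4(x) = Σ_i b_i* x b_i, and T = (T_1 + T_2 + T_3 + T_4)/4. Then for every positive semidefinite x ∈ M_k(ℂ), the matrix T(x) is diagonal: (T(x))_{ij} = 0 whenever i ≠ j. -/

import Mathlib

open ComplexOrder

/-- The Junge–Le Merdy operator `T = (T₁ + T₂ + T₃ + T₄)/4` built from `aᵢ = eᵢᵢ` and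
`bᵢ = k^{-1/(2p)} e₁ᵢ` maps positive semidefinite matrices to diagonal matrices. -/
theorem jungeLeMerdy_range_diagonal (k : ℕ) (hk : 1 ≤ k) (p : ℝ) (hp : 1 ≤ p)
    (a b : Fin k → Matrix (Fin k) (Fin k) ℂ)
    (ha : a = fun i => Matrix.single i i 1)
    (hb : b = fun i => (((k : ℝ) ^ (-(1 / (2 * p))) : ℝ) : ℂ) •
      Matrix.single (⟨0, hk⟩ : Fin k) i 1)
    (T : Matrix (Fin k) (Fin k) ℂ → Matrix (Fin k) (Fin k) ℂ)
    (hT : T = fun x => (4 : ℂ)⁻¹ •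
      ((∑ i, (a i).conjTranspose * x * b i) + (∑ i, (b i).conjTranspose * x * a i) +
       (∑ i, (a i).conjTranspose * x * a i) + (∑ i, (b i).conjTranspose * x * b i))) :
    ∀ x : Matrix (Fin k) (Fin k) ℂ, x.PosSemidef →
      ∀ i j : Fin k, i ≠ j → T x i j = 0 := by
  subst ha hb hT
  intro x hx i j hij
  have hct : ∀ r s : Fin k,
      (Matrix.single r s (1 : ℂ)).conjTranspose = Matrix.single s r 1 := by
    intro r s
    ext u v
    simp [Matrix.single, Matrix.conjTranspose_apply, and_comm]
  have key : ∀ u w l : Fin k,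
      ((Matrix.single l u (1 : ℂ) * x * Matrix.single w l 1 : Matrix (Fin k) (Fin k) ℂ)) i j = 0 := by
    intro u w l
    by_cases h : l = j
    · subst h
      have hil : i ≠ l := hij
      simp [hil]
    · simp [Ne.symm h]
  simp only [Matrix.conjTranspose_smul, Complex.star_def, Complex.conj_ofReal, hct,
    Matrix.smul_mul, Matrix.mul_smul, Matrix.smul_apply, Matrix.add_apply, Matrix.sum_apply,
    smul_eq_mul, key, mul_zero, Finset.sum_const_zero, add_zero, zero_add]
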